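/- Let p ≥ 7 be a prime, q = p^m with 5 ∤ (q^2-1), s ≥ 1, and let C be the cyclic code of length 5p^s over F_q generated by (x-1)^i with 0 < i ≤ p^s (and the factor φ_5(x) = x^4+x^3+x^2+x+1 appearing with exponent 0). Then the minimum Hamming distance of C equals 2. -/

import Mathlib

open Polynomial

/-- The cyclic code of length `n` over `F` generated by `g` in `F[x]/(xⁿ-1)`,
viewed as a set of coefficient vectors. -/
def cyclicCode (F : Type) [Field F] (n : ℕ) (g : F[X]) : Set (Fin n → F) :=
  {c | Ideal.Quotient.mk (Ideal.span {(X : F[X]) ^ n - 1})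
        (∑ i : Fin n, C (c i) * X ^ (i : ℕ)) ∈
      Ideal.span {Ideal.Quotient.mk (Ideal.span {(X : F[X]) ^ n - 1}) g}}

theorem stmt_12 (p m q s : ℕ) (hp : p.Prime) (hp7 : 7 ≤ p) (hm : 0 < m) (hq : q = p ^ m)
    (hs : 1 ≤ s) (h5 : ¬ (5 ∣ q ^ 2 - 1))
    (F : Type) [Field F] [Fintype F] [DecidableEq F] (hF : Fintype.card F = q)
    (i : ℕ) (hi0 : 0 < i) (hi : i ≤ p ^ s) :
    sInf {w | ∃ c ∈ cyclicCode F (5 * p ^ s) ((X - 1) ^ i),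
        c ≠ 0 ∧ hammingNorm c = w} = 2 := by
  haveI : Fact p.Prime := ⟨hp⟩
  have ha0 : 0 < p ^ s := pow_pos hp.pos s
  set n : ℕ := 5 * p ^ s with hn_def
  have han : p ^ s < n := by
    have : 1 * p ^ s < 5 * p ^ s := by omega
    simpa using this
  -- characteristic of F is p
  have hchar : CharP F p := by
    have h0 : ((p : F)) ^ m = 0 := by
      have h := FiniteField.cast_card_eq_zero F
      rw [hF, hq] at h
      exact_mod_cast h
    have hp0 : (p : F) = 0 := pow_eq_zero_iff hm.ne' |>.mp h0
    have hdvd : ringChar F ∣ p := (ringChar.spec F p).mp hp0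
    have hprime : (ringChar F).Prime := CharP.char_is_prime F (ringChar F)
    have : ringChar F = p := (Nat.prime_dvd_prime_iff_eq hprime hp).mp hdvd
    rw [← this]; exact ringChar.charP F
  haveI := hchar
  haveI : CharP F[X] p := Polynomial.instCharP p
  -- the key polynomial identity
  have hkey : ((X : F[X]) - 1) ^ (p ^ s) = X ^ (p ^ s) - 1 := by
    have := sub_pow_char_pow (R := F[X]) (x := (X : F[X])) (y := 1) (p := p) (n := s)
    simpa using this
  set P : F[X] := X ^ (p ^ s) - 1 with hP_def
  have hPdeg : P.natDegree < n := by
    have : P.natDegree = p ^ s := by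
      have : P = X ^ (p ^ s) - C 1 := by simp [hP_def]
      rw [this, natDegree_X_pow_sub_C]
    omega
  -- the explicit weight-2 codeword
  set a : Fin n := ⟨p ^ s, han⟩ with ha_def
  set c : Fin n → F := fun j => P.coeff j with hc_def
  have hsum : (∑ j : Fin n, C (c j) * X ^ (j : ℕ)) = P := by
    rw [Fin.sum_univ_eq_sum_range (fun j => C (P.coeff j) * X ^ j) n]
    conv_rhs => rw [P.as_sum_range' n hPdeg]
    exact Finset.sum_congr rfl fun j _ => C_mul_X_pow_eq_monomial
  have hcoeff : ∀ j : Fin n, c j = (if (j : ℕ) = p ^ s then (1 : F) else 0)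
      - (if (j : ℕ) = 0 then 1 else 0) := by
    intro j
    simp [hc_def, hP_def, coeff_X_pow, coeff_one, eq_comm]
  have hca : c a = 1 := by rw [hcoeff]; simp [ha_def, ha0.ne', hp.ne_zero]
  have hc0 : c 0 = -1 := by
    rw [hcoeff]
    have : ((0 : Fin n) : ℕ) = 0 := rfl
    simp [this, ha0.ne]
  have ha_ne : a ≠ 0 := by
    intro h
    have : (a : ℕ) = 0 := by rw [h]; rfl
    simp [ha_def] at this
    omega
  have hnorm : hammingNorm c = 2 := by
    have hfilt : ({j | c j ≠ 0} : Finset (Fin n)) = {a, 0} := by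
      ext j
      simp only [Finset.mem_filter, Finset.mem_univ, true_and, Finset.mem_insert,
        Finset.mem_singleton, Set.mem_setOf_eq]
      constructor
      · intro hj
        by_contra hcon
        push_neg at hcon
        obtain ⟨hja, hj0⟩ := hcon
        apply hj
        rw [hcoeff]
        have h1 : (j : ℕ) ≠ p ^ s := fun h => hja (Fin.ext (by simp [ha_def, h]))
        have h2 : (j : ℕ) ≠ 0 := fun h => hj0 (Fin.ext (by simp [h]))
        simp [h1, h2]
      · rintro (rfl | rfl)
        · rw [hca]; exact one_ne_zero
        · rw [hc0]; exact neg_ne_zero.mpr one_ne_zero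
    rw [hammingNorm, hfilt, Finset.card_insert_of_notMem (by simpa using ha_ne),
      Finset.card_singleton]
  have hc_ne : c ≠ 0 := by
    intro h
    have := hca
    rw [h] at this
    simp at this
  -- membership of the weight-2 codeword
  have hmem : c ∈ cyclicCode F n ((X - 1) ^ i) := by
    simp only [cyclicCode, Set.mem_setOf_eq, hsum]
    apply Ideal.mem_span_singleton'.mpr
    refine ⟨Ideal.Quotient.mk _ (((X : F[X]) - 1) ^ (p ^ s - i)), ?_⟩
    rw [← map_mul]
    congr 1
    rw [← pow_add, Nat.sub_add_cancel hi, hkey]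
  have h2mem : 2 ∈ {w | ∃ c ∈ cyclicCode F n ((X - 1) ^ i), c ≠ 0 ∧ hammingNorm c = w} :=
    ⟨c, hmem, hc_ne, hnorm⟩
  -- lower bound: every nonzero codeword has weight ≥ 2
  have hlb : ∀ w ∈ {w | ∃ c ∈ cyclicCode F n ((X - 1) ^ i), c ≠ 0 ∧ hammingNorm c = w},
      2 ≤ w := by
    rintro w ⟨d, hd, hd_ne, rfl⟩
    -- the sum of coordinates of any codeword is 0
    have hsum0 : (∑ j : Fin n, d j) = 0 := by
      obtain ⟨z, hz⟩ := Ideal.mem_span_singleton'.mp hd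
      obtain ⟨h, rfl⟩ := Ideal.Quotient.mk_surjective z
      rw [← map_mul] at hz
      have hmem2 : h * (X - 1) ^ i - (∑ j : Fin n, C (d j) * X ^ (j : ℕ)) ∈
          Ideal.span {(X : F[X]) ^ n - 1} := Ideal.Quotient.eq.mp hz
      obtain ⟨k, hk⟩ := Ideal.mem_span_singleton'.mp hmem2
      have heval := congrArg (fun P : F[X] => P.eval 1) hk
      simp only [eval_mul, eval_sub, eval_pow, eval_one, eval_X, eval_finset_sum, eval_C,
        sub_self, one_pow, zero_pow hi0.ne', mul_zero, mul_one, zero_sub, neg_eq_zero,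
        mul_zero] at heval
      exact neg_eq_zero.mp heval.symm
    by_contra hcon
    push_neg at hcon
    interval_cases hw : hammingNorm d
    · exact hd_ne (hammingNorm_eq_zero.mp hw)
    · obtain ⟨j, hj⟩ := Finset.card_eq_one.mp hw
      have hjmem : j ∈ ({j | d j ≠ 0} : Finset (Fin n)) := by rw [hj]; exact Finset.mem_singleton_self j
      have hdj : d j ≠ 0 := by simpa using hjmem
      apply hdj
      rw [← hsum0]
      symm
      rw [← Finset.sum_filter_ne_zero Finset.univ]
      have : (Finset.univ.filter fun j => d j ≠ 0) = {j} := hj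
      rw [this, Finset.sum_singleton]
  exact le_antisymm (Nat.sInf_le h2mem) (le_csInf ⟨2, h2mem⟩ hlb)
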